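/- Let Q be a panoptigon of lattice width at most 2 whose relaxed polygon Q^{(-1)} is a lattice polygon. Then |Q ∩ ℤ²| ≤ 11. -/

import Mathlib

/-- Embedding of the integer lattice into the real plane. -/
def latticeEmb : ℤ × ℤ → ℝ × ℝ := fun p => ((p.1 : ℝ), (p.2 : ℝ))

lemma pan_mem_openSegment (p q r : ℝ × ℝ) (t : ℝ) (h0 : 0 < t) (h1 : t < 1)
    (hr : r = p + t • (q - p)) : r ∈ openSegment ℝ p q := by
  rw [openSegment_eq_image']
  exact ⟨t, ⟨h0, h1⟩, hr.symm⟩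

/-- membership of a point on a horizontal segment between two members of a convex set -/
lemma pan_horiz_mem {C : Set (ℝ × ℝ)} (hC : Convex ℝ C) {y u v w : ℝ}
    (h1 : (u, y) ∈ C) (h2 : (v, y) ∈ C) (hu : u ≤ w) (hw : w ≤ v) : (w, y) ∈ C := by
  rcases eq_or_lt_of_le (hu.trans hw) with h | h
  · have : w = u := le_antisymm (by linarith) hu
    rwa [this]
  · have hvu : 0 < v - u := by linarith
    have ha : 0 ≤ (v - w) / (v - u) := div_nonneg (by linarith) (by linarith)
    have hb : 0 ≤ (w - u) / (v - u) := div_nonneg (by linarith) (by linarith)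
    have hab : (v - w) / (v - u) + (w - u) / (v - u) = 1 := by field_simp; ring
    have := hC h1 h2 ha hb hab
    have heq : ((v - w) / (v - u)) • ((u, y) : ℝ × ℝ) + ((w - u) / (v - u)) • ((v, y) : ℝ × ℝ)
        = (w, y) := by
      rw [Prod.smul_mk, Prod.smul_mk, Prod.mk_add_mk]
      have : v - u ≠ 0 := by linarith
      refine Prod.ext ?_ ?_ <;> simp only [smul_eq_mul] <;> field_simp <;> ring
    rwa [heq] at this

section Core

variable {T : Finset (ℤ × ℤ)} {L : Set (ℤ × ℤ)}

/-- interior of the hull -/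
def panInt (T : Finset (ℤ × ℤ)) : Set (ℝ × ℝ) :=
  interior (convexHull ℝ (latticeEmb '' (T : Set (ℤ × ℤ))))

lemma pan_convex (T : Finset (ℤ × ℤ)) : Convex ℝ (panInt T) :=
  (convex_convexHull ℝ _).interior

lemma pan_row_convex
    (hL : ∀ q : ℤ × ℤ, q ∈ L ↔ latticeEmb q ∈ panInt T)
    {x x' z j : ℤ} (h1 : (x, j) ∈ L) (h2 : (x', j) ∈ L) (hx : x ≤ z) (hz : z ≤ x') :
    (z, j) ∈ L := by
  rw [hL] at h1 h2 ⊢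
  have := pan_horiz_mem (pan_convex T) (y := (j : ℝ)) (u := (x : ℝ)) (v := (x' : ℝ))
    (w := (z : ℝ)) h1 h2 (by exact_mod_cast hx) (by exact_mod_cast hz)
  exact this

lemma pan_exists_high
    (hL : ∀ q : ℤ × ℤ, q ∈ L ↔ latticeEmb q ∈ panInt T)
    {s : ℤ} (hs : s = 1 ∨ s = -1) {c j : ℤ} (hc : (c, j) ∈ L) :
    ∃ t ∈ T, 1 ≤ s * (t.2 - j) := by
  by_contra h
  push_neg at h
  have hall : ∀ t ∈ T, (s : ℝ) * t.2 ≤ (s : ℝ) * j := by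
    intro t ht
    have := h t ht
    have h2 : s * t.2 ≤ s * j := by nlinarith [sq_nonneg s]
    exact_mod_cast h2
  have hlin : IsLinearMap ℝ (fun z : ℝ × ℝ => (s : ℝ) * z.2) :=
    ⟨fun x y => by simp [mul_add], fun c x => by simp; ring⟩
  have hhalf : Convex ℝ {z : ℝ × ℝ | (s : ℝ) * z.2 ≤ (s : ℝ) * j} :=
    convex_halfSpace_le hlin _
  have hsub : convexHull ℝ (latticeEmb '' (T : Set (ℤ × ℤ))) ⊆
      {z : ℝ × ℝ | (s : ℝ) * z.2 ≤ (s : ℝ) * j} := by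
    apply convexHull_min _ hhalf
    rintro _ ⟨t, ht, rfl⟩
    exact hall t ht
  have hmem : latticeEmb (c, j) ∈ panInt T := (hL _).mp hc
  obtain ⟨ε, hε, hball⟩ := Metric.isOpen_iff.mp isOpen_interior _ hmem
  set ζ : ℝ × ℝ := ((c : ℝ), (j : ℝ) + (s : ℝ) * ε / 2) with hζ
  have hd : dist ζ (latticeEmb (c, j)) < ε := by
    have hs1 : |(s : ℝ)| = 1 := by rcases hs with h' | h' <;> simp [h']
    have h1 : dist ζ (latticeEmb (c, j)) = ε / 2 := by
      simp only [hζ, latticeEmb, Prod.dist_eq, Real.dist_eq]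
      rw [show ((c:ℝ) - c) = 0 by ring, show ((j:ℝ) + (s:ℝ) * ε / 2 - j) = (s:ℝ) * ε / 2 by ring]
      rw [abs_zero, abs_div, abs_mul, hs1, one_mul, abs_of_nonneg hε.le]
      simp [max_eq_right]
      positivity
    rw [h1]; linarith
  have hζmem : ζ ∈ panInt T := hball hd
  have := hsub (interior_subset hζmem)
  simp only [hζ, Set.mem_setOf_eq] at this
  have hss : (s : ℝ) * (s : ℝ) = 1 := by rcases hs with h' | h' <;> norm_num [h']
  nlinarith

end Core

lemma latticeEmb_pair (x y : ℤ) : latticeEmb (x, y) = ((x : ℝ), (y : ℝ)) := rfl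

lemma latticeEmb_eq (q : ℤ × ℤ) : latticeEmb q = ((q.1 : ℝ), (q.2 : ℝ)) := rfl

section Vis

variable {T : Finset (ℤ × ℤ)} {L : Set (ℤ × ℤ)} {p : ℤ × ℤ}

lemma pan_seg_helper {x1 y1 x2 y2 x3 y3 t : ℝ} (h0 : 0 < t) (h1 : t < 1)
    (hx : x2 = x1 + t * (x3 - x1)) (hy : y2 = y1 + t * (y3 - y1)) :
    ((x2, y2) : ℝ × ℝ) ∈ openSegment ℝ (x1, y1) (x3, y3) := by
  refine pan_mem_openSegment _ _ _ t h0 h1 ?_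
  rw [Prod.ext_iff]
  simp only [Prod.fst_add, Prod.snd_add, Prod.smul_fst, Prod.smul_snd, Prod.fst_sub,
    Prod.snd_sub, smul_eq_mul]
  exact ⟨hx, hy⟩

lemma pan_near
    (hvis : ∀ q ∈ L, q ≠ p → ∀ r : ℤ × ℤ,
      latticeEmb r ∉ openSegment ℝ (latticeEmb p) (latticeEmb q))
    {q : ℤ × ℤ} (hq : q ∈ L) (hq2 : q.2 = p.2) : |q.1 - p.1| ≤ 1 := by
  by_contra habs
  push_neg at habs
  have hd : 2 ≤ q.1 - p.1 ∨ q.1 - p.1 ≤ -2 := by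
    rcases abs_cases (q.1 - p.1) with ⟨h1, _⟩ | ⟨h1, _⟩ <;> omega
  have hne : q ≠ p := by
    intro h; subst h; simp at habs
  rcases hd with hd | hd
  · have hd0 : (0 : ℝ) < ((q.1 - p.1 : ℤ) : ℝ) := by exact_mod_cast (by omega : (0:ℤ) < q.1 - p.1)
    refine hvis q hq hne (p.1 + 1, p.2) ?_
    simp only [latticeEmb_eq]
    refine pan_seg_helper (t := 1 / ((q.1 - p.1 : ℤ) : ℝ)) (by positivity) ?_ ?_ ?_
    · rw [div_lt_one hd0]; exact_mod_cast (by omega : (1:ℤ) < q.1 - p.1)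
    · have h1 : ((q.1 : ℝ) - p.1) = ((q.1 - p.1 : ℤ) : ℝ) := by push_cast; ring
      rw [h1, one_div_mul_cancel (ne_of_gt hd0)]; push_cast; ring
    · push_cast [hq2]; ring
  · have hd0 : (0 : ℝ) < ((p.1 - q.1 : ℤ) : ℝ) := by exact_mod_cast (by omega : (0:ℤ) < p.1 - q.1)
    refine hvis q hq hne (p.1 - 1, p.2) ?_
    simp only [latticeEmb_eq]
    refine pan_seg_helper (t := 1 / ((p.1 - q.1 : ℤ) : ℝ)) (by positivity) ?_ ?_ ?_
    · rw [div_lt_one hd0]; exact_mod_cast (by omega : (1:ℤ) < p.1 - q.1)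
    · have h1 : ((q.1 : ℝ) - p.1) = -((p.1 - q.1 : ℤ) : ℝ) := by push_cast; ring
      rw [h1, mul_neg, one_div_mul_cancel (ne_of_gt hd0)]; push_cast; ring
    · push_cast [hq2]; ring

end Vis

section Far

variable {T : Finset (ℤ × ℤ)} {L : Set (ℤ × ℤ)} {p : ℤ × ℤ}

lemma pan_far_aux
    (hL : ∀ q : ℤ × ℤ, q ∈ L ↔ latticeEmb q ∈ panInt T)
    (hvis : ∀ q ∈ L, q ≠ p → ∀ r : ℤ × ℤ,
      latticeEmb r ∉ openSegment ℝ (latticeEmb p) (latticeEmb q))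
    {s : ℤ} (hs : s = 1 ∨ s = -1)
    {q q' : ℤ × ℤ} (hq : q ∈ L) (hq' : q' ∈ L)
    (h2 : q.2 = p.2 + 2 * s) (h2' : q'.2 = p.2 + 2 * s) (hlt : q.1 < q'.1) : False := by
  have hqpair : (q.1, p.2 + 2 * s) ∈ L := by rw [← h2]; exact hq
  have hq'pair : (q'.1, p.2 + 2 * s) ∈ L := by rw [← h2']; exact hq'
  obtain ⟨z, k, hz1, hz2, hzk⟩ : ∃ z k : ℤ, q.1 ≤ z ∧ z ≤ q'.1 ∧ z = p.1 + 2 * k := by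
    rcases Int.even_or_odd (q.1 - p.1) with ⟨k, hk⟩ | ⟨k, hk⟩
    · exact ⟨q.1, k, le_refl _, hlt.le, by omega⟩
    · exact ⟨q.1 + 1, k + 1, by omega, by omega, by omega⟩
  have hmem : (z, p.2 + 2 * s) ∈ L := pan_row_convex hL hqpair hq'pair hz1 hz2
  have hne : (z, p.2 + 2 * s) ≠ p := by
    intro h
    have := congrArg Prod.snd h
    simp at this
    rcases hs with h' | h' <;> omega
  refine hvis _ hmem hne (p.1 + k, p.2 + s) ?_
  simp only [latticeEmb_eq]
  refine pan_seg_helper (t := (1:ℝ)/2) (by norm_num) (by norm_num) ?_ ?_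
  · push_cast [hzk]; ring
  · push_cast; ring

lemma pan_far_single
    (hL : ∀ q : ℤ × ℤ, q ∈ L ↔ latticeEmb q ∈ panInt T)
    (hvis : ∀ q ∈ L, q ≠ p → ∀ r : ℤ × ℤ,
      latticeEmb r ∉ openSegment ℝ (latticeEmb p) (latticeEmb q))
    {s : ℤ} (hs : s = 1 ∨ s = -1)
    {q q' : ℤ × ℤ} (hq : q ∈ L) (hq' : q' ∈ L)
    (h2 : q.2 = p.2 + 2 * s) (h2' : q'.2 = p.2 + 2 * s) : q.1 = q'.1 := by
  rcases lt_trichotomy q.1 q'.1 with h | h | h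
  · exact absurd (pan_far_aux hL hvis hs hq hq' h2 h2' h) not_false
  · exact h
  · exact absurd (pan_far_aux hL hvis hs hq' hq h2' h2 h) not_false

end Far

section Cone

variable {T : Finset (ℤ × ℤ)} {L : Set (ℤ × ℤ)}

lemma pan_cone
    (hL : ∀ q : ℤ × ℤ, q ∈ L ↔ latticeEmb q ∈ panInt T)
    {s : ℤ} (hs : s = 1 ∨ s = -1) {j B c : ℤ} (hB0 : 0 ≤ B)
    (hc : (c, j) ∈ L) (hrow : ∀ x : ℤ, (x, j) ∈ L → |x - c| ≤ B)
    {u v : ℤ} (ht : (u, v) ∈ T) (hv : 1 ≤ s * (v - j))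
    {x1 x2 : ℤ} (h1 : (x1, j - s) ∈ L) (h2 : (x2, j - s) ∈ L) : |x1 - x2| ≤ 4 * B + 3 := by
  set D : ℤ := s * (v - j) with hD
  have hss : s * s = 1 := by rcases hs with h | h <;> norm_num [h]
  have hsD : s * D = v - j := by rcases hs with h | h <;> rw [hD, h] <;> ring
  set δ : ℝ := (D : ℝ) with hδ
  have hδ1 : (1 : ℝ) ≤ δ := by rw [hδ]; exact_mod_cast hv
  have hB0' : (0 : ℝ) ≤ (B : ℝ) := by exact_mod_cast hB0
  have hδpos : (0 : ℝ) < δ + 1 := by linarith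
  set θ : ℝ := 1 / (δ + 1) with hθ
  have hθpos : 0 < θ := by positivity
  have hθhalf : θ ≤ 1 / 2 := by
    rw [hθ, div_le_div_iff₀ hδpos (by norm_num)]; linarith
  have h1θ : (1 : ℝ) / 2 ≤ 1 - θ := by linarith
  have h1θpos : 0 < 1 - θ := by linarith
  have key : ∀ x : ℤ, (x, j - s) ∈ L →
      |(1 - θ) * (x : ℝ) + θ * (u : ℝ) - (c : ℝ)| < (B : ℝ) + 1 := by
    intro x hx
    have hxI : latticeEmb (x, j - s) ∈ panInt T := (hL _).mp hx
    have htP : latticeEmb (u, v) ∈ convexHull ℝ (latticeEmb '' (T : Set (ℤ × ℤ))) :=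
      subset_convexHull _ _ ⟨(u, v), ht, rfl⟩
    have hW : ((1 - θ) • latticeEmb (x, j - s) + θ • latticeEmb (u, v)) ∈ panInt T :=
      (convex_convexHull ℝ _).combo_interior_closure_mem_interior hxI
        (subset_closure htP) h1θpos hθpos.le (by ring)
    have hvD : (v : ℝ) = (j : ℝ) + (s : ℝ) * δ := by
      rw [hδ]
      exact_mod_cast (by omega : v = j + s * D)
    have hWeq : (1 - θ) • latticeEmb (x, j - s) + θ • latticeEmb (u, v)
        = (((1 - θ) * (x : ℝ) + θ * (u : ℝ)), (j : ℝ)) := by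
      simp only [latticeEmb_pair, Prod.smul_mk, Prod.mk_add_mk, smul_eq_mul]
      refine Prod.ext rfl ?_
      show (1 - θ) * ((j - s : ℤ) : ℝ) + θ * (v : ℝ) = (j : ℝ)
      have hss' : (s : ℝ) * (s : ℝ) = 1 := by exact_mod_cast hss
      rw [hvD, hθ]
      push_cast
      field_simp
      ring
    rw [hWeq] at hW
    set W1 : ℝ := (1 - θ) * (x : ℝ) + θ * (u : ℝ) with hW1
    have hcI : ((c : ℝ), (j : ℝ)) ∈ panInt T := (hL _).mp hc
    have hup : W1 < (c : ℝ) + B + 1 := by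
      by_contra hge
      push_neg at hge
      have hzmem : (((c + B + 1 : ℤ) : ℝ), (j : ℝ)) ∈ panInt T := by
        refine pan_horiz_mem (pan_convex T) hcI hW ?_ ?_
        · push_cast; linarith
        · push_cast; linarith
      have hzL : (c + B + 1, j) ∈ L := (hL _).mpr hzmem
      have := hrow _ hzL
      rcases abs_cases (c + B + 1 - c) with ⟨h', _⟩ | ⟨h', _⟩ <;> omega
    have hdown : (c : ℝ) - B - 1 < W1 := by
      by_contra hge
      push_neg at hge
      have hzmem : (((c - B - 1 : ℤ) : ℝ), (j : ℝ)) ∈ panInt T := by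
        refine pan_horiz_mem (pan_convex T) hW hcI ?_ ?_
        · push_cast; linarith
        · push_cast; linarith
      have hzL : (c - B - 1, j) ∈ L := (hL _).mpr hzmem
      have := hrow _ hzL
      rcases abs_cases (c - B - 1 - c) with ⟨h', _⟩ | ⟨h', _⟩ <;> omega
    rw [abs_lt]
    constructor <;> [linarith; linarith]
  have k1 := abs_lt.mp (key x1 h1)
  have k2 := abs_lt.mp (key x2 h2)
  have habs : |(1 - θ) * ((x1 : ℝ) - x2)| < 2 * (B : ℝ) + 2 := by
    rw [abs_lt]
    constructor <;> nlinarith [k1.1, k1.2, k2.1, k2.2]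
  rw [abs_mul, abs_of_pos h1θpos] at habs
  have hfin : |(x1 : ℝ) - x2| < 4 * (B : ℝ) + 4 := by
    nlinarith [abs_nonneg ((x1 : ℝ) - x2)]
  have hint : |x1 - x2| < 4 * B + 4 := by
    have : ((|x1 - x2| : ℤ) : ℝ) < 4 * (B : ℝ) + 4 := by
      rw [Int.cast_abs]; push_cast; push_cast at hfin; exact hfin
    exact_mod_cast this
  omega

end Cone

section Mid

variable {T : Finset (ℤ × ℤ)} {L : Set (ℤ × ℤ)}

lemma pan_mid_mem
    (hL : ∀ q : ℤ × ℤ, q ∈ L ↔ latticeEmb q ∈ panInt T)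
    {x z m : ℤ} (h1 : (x, m) ∈ L) (h3 : (z, m + 2) ∈ L) :
    ((((x : ℝ) + z) / 2), ((m : ℝ) + 1)) ∈ panInt T := by
  have hA := (hL _).mp h1
  have hB := (hL _).mp h3
  have := (pan_convex T) hA hB (by norm_num : (0:ℝ) ≤ 1/2) (by norm_num : (0:ℝ) ≤ 1/2)
    (by norm_num)
  have heq : (1/2 : ℝ) • latticeEmb (x, m) + (1/2 : ℝ) • latticeEmb (z, m + 2)
      = ((((x : ℝ) + z) / 2), ((m : ℝ) + 1)) := by
    simp only [latticeEmb_pair, Prod.smul_mk, Prod.mk_add_mk, smul_eq_mul]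
    refine Prod.ext (by push_cast; ring) (by push_cast; ring)
  rwa [heq] at this

lemma pan_mid
    (hL : ∀ q : ℤ × ℤ, q ∈ L ↔ latticeEmb q ∈ panInt T)
    {m w₀ : ℤ} {x x' z z' : ℤ}
    (h1 : (x, m) ∈ L) (h2 : (x', m) ∈ L) (h3 : (z, m + 2) ∈ L) (h4 : (z', m + 2) ∈ L)
    (hxx : x ≤ x') (hzz : z ≤ z')
    (hwin : ∀ n : ℤ, (n, m + 1) ∈ L → |n - w₀| ≤ 1) :
    (x' - x) + (z' - z) ≤ 6 := by
  by_contra habs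
  push_neg at habs
  set X : ℤ := x + z with hX
  set Y : ℤ := x' + z' with hY
  have hXY : X + 7 ≤ Y := by omega
  have key : ∀ n : ℤ, X ≤ 2 * n → 2 * n ≤ Y → (n, m + 1) ∈ L := by
    intro n hlow hhigh
    have hmem : (((n : ℝ)), ((m : ℝ) + 1)) ∈ panInt T := by
      refine pan_horiz_mem (pan_convex T) (pan_mid_mem hL h1 h3) (pan_mid_mem hL h2 h4) ?_ ?_
      · rw [div_le_iff₀ (by norm_num : (0:ℝ) < 2)]
        exact_mod_cast (by omega : x + z ≤ n * 2)
      · rw [le_div_iff₀ (by norm_num : (0:ℝ) < 2)]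
        exact_mod_cast (by omega : n * 2 ≤ x' + z')
    have hcast : latticeEmb (n, m + 1) = (((n : ℝ)), ((m : ℝ) + 1)) := by
      rw [latticeEmb_pair]; norm_num
    rw [hL, hcast]; exact hmem
  have k0 := hwin _ (key ((X + 1) / 2) (by omega) (by omega))
  have k3 := hwin _ (key ((X + 1) / 2 + 3) (by omega) (by omega))
  rcases abs_cases ((X + 1) / 2 - w₀) with ⟨hc0, _⟩ | ⟨hc0, _⟩ <;>
    rcases abs_cases ((X + 1) / 2 + 3 - w₀) with ⟨hc3, _⟩ | ⟨hc3, _⟩ <;> omega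

end Mid

lemma pan_interval {R : Set ℤ} {x0 : ℤ} (hx0 : x0 ∈ R) {D : ℤ}
    (hD : ∀ x ∈ R, ∀ y ∈ R, |x - y| ≤ D) :
    ∃ a b : ℤ, a ∈ R ∧ b ∈ R ∧ (∀ x ∈ R, a ≤ x ∧ x ≤ b) ∧ b - a ≤ D := by
  have hsub : R ⊆ Set.Icc (x0 - D) (x0 + D) := by
    intro x hx
    have := hD x hx x0 hx0
    rcases abs_cases (x - x0) with ⟨h', _⟩ | ⟨h', _⟩ <;>
      simp only [Set.mem_Icc] <;> omega
  have hfin : R.Finite := (Set.finite_Icc _ _).subset hsub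
  have hne : hfin.toFinset.Nonempty := ⟨x0, hfin.mem_toFinset.mpr hx0⟩
  refine ⟨hfin.toFinset.min' hne, hfin.toFinset.max' hne,
    hfin.mem_toFinset.mp (hfin.toFinset.min'_mem hne),
    hfin.mem_toFinset.mp (hfin.toFinset.max'_mem hne), ?_, ?_⟩
  · intro x hx
    exact ⟨hfin.toFinset.min'_le x (hfin.mem_toFinset.mpr hx),
      hfin.toFinset.le_max' x (hfin.mem_toFinset.mpr hx)⟩
  · have h1 := hD _ (hfin.mem_toFinset.mp (hfin.toFinset.max'_mem hne))
      _ (hfin.mem_toFinset.mp (hfin.toFinset.min'_mem hne))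
    rcases abs_cases (hfin.toFinset.max' hne - hfin.toFinset.min' hne) with ⟨h', _⟩ | ⟨h', _⟩ <;>
      omega

lemma pan_count (L : Set (ℤ × ℤ)) (m a0 b0 a1 b1 a2 b2 : ℤ)
    (hm : ∀ q ∈ L, q.2 = m ∨ q.2 = m + 1 ∨ q.2 = m + 2)
    (h0 : ∀ q ∈ L, q.2 = m → a0 ≤ q.1 ∧ q.1 ≤ b0)
    (h1 : ∀ q ∈ L, q.2 = m + 1 → a1 ≤ q.1 ∧ q.1 ≤ b1)
    (h2 : ∀ q ∈ L, q.2 = m + 2 → a2 ≤ q.1 ∧ q.1 ≤ b2) :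
    L.ncard ≤ (b0 + 1 - a0).toNat + (b1 + 1 - a1).toNat + (b2 + 1 - a2).toNat := by
  classical
  set F : Finset (ℤ × ℤ) :=
    (Finset.Icc a0 b0 ×ˢ {m}) ∪ (Finset.Icc a1 b1 ×ˢ {m + 1}) ∪ (Finset.Icc a2 b2 ×ˢ {m + 2})
    with hF
  have hsub : L ⊆ (F : Set (ℤ × ℤ)) := by
    intro q hq
    simp only [hF, Finset.coe_union, Set.mem_union, Finset.coe_product, Set.mem_prod,
      Finset.coe_Icc, Set.mem_Icc, Finset.coe_singleton, Set.mem_singleton_iff]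
    rcases hm q hq with h | h | h
    · exact Or.inl (Or.inl ⟨h0 q hq h, h⟩)
    · exact Or.inl (Or.inr ⟨h1 q hq h, h⟩)
    · exact Or.inr ⟨h2 q hq h, h⟩
  calc L.ncard ≤ (F : Set (ℤ × ℤ)).ncard := Set.ncard_le_ncard hsub F.finite_toSet
    _ = F.card := Set.ncard_coe_finset F
    _ ≤ _ := by
        refine (Finset.card_union_le _ _).trans ?_
        have := Finset.card_union_le (Finset.Icc a0 b0 ×ˢ ({m} : Finset ℤ))
          (Finset.Icc a1 b1 ×ˢ ({m + 1} : Finset ℤ))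
        have hc0 : (Finset.Icc a0 b0 ×ˢ ({m} : Finset ℤ)).card = (b0 + 1 - a0).toNat := by
          rw [Finset.card_product, Int.card_Icc, Finset.card_singleton, mul_one]
        have hc1 : (Finset.Icc a1 b1 ×ˢ ({m + 1} : Finset ℤ)).card = (b1 + 1 - a1).toNat := by
          rw [Finset.card_product, Int.card_Icc, Finset.card_singleton, mul_one]
        have hc2 : (Finset.Icc a2 b2 ×ˢ ({m + 2} : Finset ℤ)).card = (b2 + 1 - a2).toNat := by
          rw [Finset.card_product, Int.card_Icc, Finset.card_singleton, mul_one]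
        omega

lemma pan_row_bound {L : Set (ℤ × ℤ)} (j D : ℤ) (hD0 : 0 ≤ D)
    (hpair : ∀ x1 x2 : ℤ, (x1, j) ∈ L → (x2, j) ∈ L → |x1 - x2| ≤ D) :
    ∃ a b : ℤ, b + 1 - a ≤ D + 1 ∧ 0 ≤ b + 1 - a ∧ ∀ q ∈ L, q.2 = j → a ≤ q.1 ∧ q.1 ≤ b := by
  by_cases hne : ∃ x : ℤ, (x, j) ∈ L
  · obtain ⟨x0, hx0⟩ := hne
    obtain ⟨a, b, ha, hb, hbounds, hba⟩ :=
      pan_interval (R := {x : ℤ | (x, j) ∈ L}) hx0 (fun x hx y hy => hpair x y hx hy)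
    refine ⟨a, b, by omega, by have := (hbounds b hb).1; omega, ?_⟩
    intro q hq hqj
    exact hbounds q.1 (by rw [← hqj]; exact hq)
  · push_neg at hne
    exact ⟨0, -1, by omega, by omega, fun q hq hqj => absurd (by rw [← hqj]; exact hq) (hne q.1)⟩

lemma pan_main (T : Finset (ℤ × ℤ)) (L : Set (ℤ × ℤ)) (p : ℤ × ℤ) (m : ℤ)
    (hL : ∀ q : ℤ × ℤ, q ∈ L ↔ latticeEmb q ∈ panInt T)
    (hp : p ∈ L)
    (hvis : ∀ q ∈ L, q ≠ p → ∀ r : ℤ × ℤ,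
      latticeEmb r ∉ openSegment ℝ (latticeEmb p) (latticeEmb q))
    (hm : ∀ q ∈ L, q.2 = m ∨ q.2 = m + 1 ∨ q.2 = m + 2) :
    L.ncard ≤ 11 := by
  have s1 : (1 : ℤ) = 1 ∨ (1 : ℤ) = -1 := Or.inl rfl
  have sm1 : (-1 : ℤ) = 1 ∨ (-1 : ℤ) = -1 := Or.inr rfl
  rcases hm p hp with hp2 | hp2 | hp2
  -- ================== CASE: p in bottom row ==================
  · obtain ⟨c, rfl⟩ : ∃ c : ℤ, p = (c, m) := ⟨p.1, by rw [← hp2]⟩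
    have hprow : ∀ x : ℤ, (x, m) ∈ L → |x - c| ≤ 1 := fun x hx => pan_near hvis hx rfl
    have h0 : ∀ q ∈ L, q.2 = m → c - 1 ≤ q.1 ∧ q.1 ≤ c + 1 := by
      intro q hq hqj
      have := hprow q.1 (by rw [← hqj]; exact hq)
      rcases abs_cases (q.1 - c) with ⟨h', _⟩ | ⟨h', _⟩ <;> omega
    by_cases hR2 : ∃ x : ℤ, (x, m + 2) ∈ L
    · obtain ⟨e, he⟩ := hR2
      have hsingle : ∀ x : ℤ, (x, m + 2) ∈ L → x = e := by
        intro x hx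
        exact pan_far_single hL hvis s1 hx he (by ring) (by ring)
      obtain ⟨t, ht, hv⟩ := pan_exists_high hL s1 he
      have hpair1 : ∀ x1 x2 : ℤ, (x1, m + 1) ∈ L → (x2, m + 1) ∈ L → |x1 - x2| ≤ 3 := by
        intro x1 x2 hx1 hx2
        have hcone := pan_cone hL s1 (le_refl (0:ℤ)) he
          (fun x hx => by have := hsingle x hx; simp [this])
          (u := t.1) (v := t.2) ht hv
          (x1 := x1) (x2 := x2)
          (by rw [show m + 2 - 1 = m + 1 by ring]; exact hx1)
          (by rw [show m + 2 - 1 = m + 1 by ring]; exact hx2)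
        omega
      obtain ⟨a1, b1, hs1', hs1'', h1⟩ := pan_row_bound (m + 1) 3 (by norm_num) hpair1
      have h2 : ∀ q ∈ L, q.2 = m + 2 → e ≤ q.1 ∧ q.1 ≤ e := by
        intro q hq hqj
        have := hsingle q.1 (by rw [← hqj]; exact hq)
        omega
      have := pan_count L m (c - 1) (c + 1) a1 b1 e e hm h0 h1 h2
      omega
    · push_neg at hR2
      have hpair1 : ∀ x1 x2 : ℤ, (x1, m + 1) ∈ L → (x2, m + 1) ∈ L → |x1 - x2| ≤ 7 := by
        intro x1 x2 hx1 hx2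
        obtain ⟨t, ht, hv⟩ := pan_exists_high hL sm1 hp
        have hcone := pan_cone hL sm1 (by norm_num : (0:ℤ) ≤ 1) hp
          (fun x hx => hprow x hx)
          (u := t.1) (v := t.2) ht hv
          (x1 := x1) (x2 := x2)
          (by rw [show m - -1 = m + 1 by ring]; exact hx1)
          (by rw [show m - -1 = m + 1 by ring]; exact hx2)
        omega
      obtain ⟨a1, b1, hs1', hs1'', h1⟩ := pan_row_bound (m + 1) 7 (by norm_num) hpair1
      have h2 : ∀ q ∈ L, q.2 = m + 2 → 0 ≤ q.1 ∧ q.1 ≤ -1 := by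
        intro q hq hqj
        exact absurd (by rw [← hqj]; exact hq) (hR2 q.1)
      have := pan_count L m (c - 1) (c + 1) a1 b1 0 (-1) hm h0 h1 h2
      omega
  -- ================== CASE: p in middle row ==================
  · obtain ⟨c, rfl⟩ : ∃ c : ℤ, p = (c, m + 1) := ⟨p.1, by rw [← hp2]⟩
    have hprow : ∀ x : ℤ, (x, m + 1) ∈ L → |x - c| ≤ 1 := fun x hx => pan_near hvis hx rfl
    have h1 : ∀ q ∈ L, q.2 = m + 1 → c - 1 ≤ q.1 ∧ q.1 ≤ c + 1 := by
      intro q hq hqj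
      have := hprow q.1 (by rw [← hqj]; exact hq)
      rcases abs_cases (q.1 - c) with ⟨h', _⟩ | ⟨h', _⟩ <;> omega
    by_cases hR0 : ∃ x : ℤ, (x, m) ∈ L
    · by_cases hR2 : ∃ x : ℤ, (x, m + 2) ∈ L
      · -- both outer rows nonempty: midpoint argument
        obtain ⟨x0, hx0⟩ := hR0
        obtain ⟨z0, hz0⟩ := hR2
        have hpair0 : ∀ x ∈ {x : ℤ | (x, m) ∈ L}, ∀ y ∈ {x : ℤ | (x, m) ∈ L}, |x - y| ≤ 6 := by
          intro x hx y hy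
          rcases le_total y x with hle | hle
          · have := pan_mid hL hy hx hz0 hz0 hle (le_refl z0) hprow
            rcases abs_cases (x - y) with ⟨h', _⟩ | ⟨h', _⟩ <;> omega
          · have := pan_mid hL hx hy hz0 hz0 hle (le_refl z0) hprow
            rcases abs_cases (x - y) with ⟨h', _⟩ | ⟨h', _⟩ <;> omega
        have hpair2 : ∀ x ∈ {x : ℤ | (x, m + 2) ∈ L}, ∀ y ∈ {x : ℤ | (x, m + 2) ∈ L},
            |x - y| ≤ 6 := by
          intro x hx y hy
          rcases le_total y x with hle | hle
          · have := pan_mid hL hx0 hx0 hy hx (le_refl x0) hle hprow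
            rcases abs_cases (x - y) with ⟨h', _⟩ | ⟨h', _⟩ <;> omega
          · have := pan_mid hL hx0 hx0 hx hy (le_refl x0) hle hprow
            rcases abs_cases (x - y) with ⟨h', _⟩ | ⟨h', _⟩ <;> omega
        obtain ⟨a0, b0, ha0, hb0, hbounds0, hba0⟩ :=
          pan_interval (R := {x : ℤ | (x, m) ∈ L}) hx0 hpair0
        obtain ⟨a2, b2, ha2, hb2, hbounds2, hba2⟩ :=
          pan_interval (R := {x : ℤ | (x, m + 2) ∈ L}) hz0 hpair2
        have hjoint : (b0 - a0) + (b2 - a2) ≤ 6 :=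
          pan_mid hL ha0 hb0 ha2 hb2 (hbounds0 b0 hb0).1 (hbounds2 b2 hb2).1 hprow
        have h0 : ∀ q ∈ L, q.2 = m → a0 ≤ q.1 ∧ q.1 ≤ b0 := by
          intro q hq hqj
          exact hbounds0 q.1 (by rw [← hqj]; exact hq)
        have h2 : ∀ q ∈ L, q.2 = m + 2 → a2 ≤ q.1 ∧ q.1 ≤ b2 := by
          intro q hq hqj
          exact hbounds2 q.1 (by rw [← hqj]; exact hq)
        have := pan_count L m a0 b0 (c - 1) (c + 1) a2 b2 hm h0 h1 h2
        have hle0 : a0 ≤ b0 := (hbounds0 b0 hb0).1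
        have hle2 : a2 ≤ b2 := (hbounds2 b2 hb2).1
        omega
      · -- middle row, top row empty
        push_neg at hR2
        have hpair0 : ∀ x1 x2 : ℤ, (x1, m) ∈ L → (x2, m) ∈ L → |x1 - x2| ≤ 7 := by
          intro x1 x2 hx1 hx2
          obtain ⟨t, ht, hv⟩ := pan_exists_high hL s1 hp
          have hcone := pan_cone hL s1 (by norm_num : (0:ℤ) ≤ 1) hp
            (fun x hx => hprow x hx)
            (u := t.1) (v := t.2) ht hv
            (x1 := x1) (x2 := x2)
            (by rw [show m + 1 - 1 = m by ring]; exact hx1)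
            (by rw [show m + 1 - 1 = m by ring]; exact hx2)
          omega
        obtain ⟨a0, b0, hs0', hs0'', h0⟩ := pan_row_bound m 7 (by norm_num) hpair0
        have h2 : ∀ q ∈ L, q.2 = m + 2 → 0 ≤ q.1 ∧ q.1 ≤ -1 := by
          intro q hq hqj
          exact absurd (by rw [← hqj]; exact hq) (hR2 q.1)
        have := pan_count L m a0 b0 (c - 1) (c + 1) 0 (-1) hm h0 h1 h2
        omega
    · -- middle row, bottom row empty
      push_neg at hR0
      have h0 : ∀ q ∈ L, q.2 = m → 0 ≤ q.1 ∧ q.1 ≤ -1 := by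
        intro q hq hqj
        exact absurd (by rw [← hqj]; exact hq) (hR0 q.1)
      have hpair2 : ∀ x1 x2 : ℤ, (x1, m + 2) ∈ L → (x2, m + 2) ∈ L → |x1 - x2| ≤ 7 := by
        intro x1 x2 hx1 hx2
        obtain ⟨t, ht, hv⟩ := pan_exists_high hL sm1 hp
        have hcone := pan_cone hL sm1 (by norm_num : (0:ℤ) ≤ 1) hp
          (fun x hx => hprow x hx)
          (u := t.1) (v := t.2) ht hv
          (x1 := x1) (x2 := x2)
          (by rw [show m + 1 - -1 = m + 2 by ring]; exact hx1)
          (by rw [show m + 1 - -1 = m + 2 by ring]; exact hx2)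
        omega
      obtain ⟨a2, b2, hs2', hs2'', h2⟩ := pan_row_bound (m + 2) 7 (by norm_num) hpair2
      have := pan_count L m 0 (-1) (c - 1) (c + 1) a2 b2 hm h0 h1 h2
      omega
  -- ================== CASE: p in top row ==================
  · obtain ⟨c, rfl⟩ : ∃ c : ℤ, p = (c, m + 2) := ⟨p.1, by rw [← hp2]⟩
    have hprow : ∀ x : ℤ, (x, m + 2) ∈ L → |x - c| ≤ 1 := fun x hx => pan_near hvis hx rfl
    have h2 : ∀ q ∈ L, q.2 = m + 2 → c - 1 ≤ q.1 ∧ q.1 ≤ c + 1 := by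
      intro q hq hqj
      have := hprow q.1 (by rw [← hqj]; exact hq)
      rcases abs_cases (q.1 - c) with ⟨h', _⟩ | ⟨h', _⟩ <;> omega
    by_cases hR0 : ∃ x : ℤ, (x, m) ∈ L
    · obtain ⟨e, he⟩ := hR0
      have hsingle : ∀ x : ℤ, (x, m) ∈ L → x = e := by
        intro x hx
        exact pan_far_single hL hvis sm1 hx he (by ring) (by ring)
      obtain ⟨t, ht, hv⟩ := pan_exists_high hL sm1 he
      have hpair1 : ∀ x1 x2 : ℤ, (x1, m + 1) ∈ L → (x2, m + 1) ∈ L → |x1 - x2| ≤ 3 := by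
        intro x1 x2 hx1 hx2
        have hcone := pan_cone hL sm1 (le_refl (0:ℤ)) he
          (fun x hx => by have := hsingle x hx; simp [this])
          (u := t.1) (v := t.2) ht hv
          (x1 := x1) (x2 := x2)
          (by rw [show m - -1 = m + 1 by ring]; exact hx1)
          (by rw [show m - -1 = m + 1 by ring]; exact hx2)
        omega
      obtain ⟨a1, b1, hs1', hs1'', h1⟩ := pan_row_bound (m + 1) 3 (by norm_num) hpair1
      have h0 : ∀ q ∈ L, q.2 = m → e ≤ q.1 ∧ q.1 ≤ e := by
        intro q hq hqj
        have := hsingle q.1 (by rw [← hqj]; exact hq)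
        omega
      have := pan_count L m e e a1 b1 (c - 1) (c + 1) hm h0 h1 h2
      omega
    · push_neg at hR0
      have h0 : ∀ q ∈ L, q.2 = m → 0 ≤ q.1 ∧ q.1 ≤ -1 := by
        intro q hq hqj
        exact absurd (by rw [← hqj]; exact hq) (hR0 q.1)
      have hpair1 : ∀ x1 x2 : ℤ, (x1, m + 1) ∈ L → (x2, m + 1) ∈ L → |x1 - x2| ≤ 7 := by
        intro x1 x2 hx1 hx2
        obtain ⟨t, ht, hv⟩ := pan_exists_high hL s1 hp
        have hcone := pan_cone hL s1 (by norm_num : (0:ℤ) ≤ 1) hp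
          (fun x hx => hprow x hx)
          (u := t.1) (v := t.2) ht hv
          (x1 := x1) (x2 := x2)
          (by rw [show m + 2 - 1 = m + 1 by ring]; exact hx1)
          (by rw [show m + 2 - 1 = m + 1 by ring]; exact hx2)
        omega
      obtain ⟨a1, b1, hs1', hs1'', h1⟩ := pan_row_bound (m + 1) 7 (by norm_num) hpair1
      have := pan_count L m 0 (-1) a1 b1 (c - 1) (c + 1) hm h0 h1 h2
      omega

/-- A linear map of the plane given by an integer matrix. -/
def panMap (α β γ δ : ℤ) : (ℝ × ℝ) →ₗ[ℝ] (ℝ × ℝ) where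
  toFun z := ((α : ℝ) * z.1 + (β : ℝ) * z.2, (γ : ℝ) * z.1 + (δ : ℝ) * z.2)
  map_add' x y := by
    refine Prod.ext ?_ ?_ <;> simp only [Prod.fst_add, Prod.snd_add] <;> ring
  map_smul' c x := by
    refine Prod.ext ?_ ?_ <;>
      simp only [Prod.smul_fst, Prod.smul_snd, smul_eq_mul, RingHom.id_apply] <;> ring

lemma panMap_apply (α β γ δ : ℤ) (z : ℝ × ℝ) :
    panMap α β γ δ z = ((α : ℝ) * z.1 + (β : ℝ) * z.2, (γ : ℝ) * z.1 + (δ : ℝ) * z.2) := rfl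

/-- Homeomorphism of the plane from a pair of mutually inverse linear maps. -/
def panHomeo (f g : (ℝ × ℝ) →ₗ[ℝ] (ℝ × ℝ)) (hfg : ∀ z, f (g z) = z)
    (hgf : ∀ z, g (f z) = z) : Homeomorph (ℝ × ℝ) (ℝ × ℝ) where
  toFun := f
  invFun := g
  left_inv := hgf
  right_inv := hfg
  continuous_toFun := f.continuous_of_finiteDimensional
  continuous_invFun := g.continuous_of_finiteDimensional

/-- A panoptigon `Q` of lattice width at most 2 whose relaxed polygon `Q^{(-1)}` is a
lattice polygon (equivalently, `Q` is the interior polygon of some lattice polygon) has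
at most 11 lattice points. -/
theorem lw_le_two_panoptigon_card_le_11 (S : Finset (ℤ × ℤ)) (Q : Set (ℝ × ℝ))
    (hQ : Q = convexHull ℝ (latticeEmb '' (S : Set (ℤ × ℤ))))
    -- Q is a panoptigon
    (hpan : ∃ p : ℤ × ℤ, latticeEmb p ∈ Q ∧ ∀ q : ℤ × ℤ, latticeEmb q ∈ Q → q ≠ p →
      ∀ r : ℤ × ℤ, latticeEmb r ∉ openSegment ℝ (latticeEmb p) (latticeEmb q))
    -- Q has lattice width at most 2: some primitive direction has width ≤ 2
    (hlw : ∃ a b : ℤ, Int.gcd a b = 1 ∧ ∀ p ∈ S, ∀ q ∈ S,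
      |(a * p.2 - b * p.1) - (a * q.2 - b * q.1)| ≤ 2)
    -- Q^{(-1)} is a lattice polygon: Q is the interior polygon of a lattice polygon
    (hrelax : ∃ T : Finset (ℤ × ℤ), Q = convexHull ℝ
      (latticeEmb '' {q : ℤ × ℤ |
        latticeEmb q ∈ interior (convexHull ℝ (latticeEmb '' (T : Set (ℤ × ℤ))))})) :
    Set.ncard {q : ℤ × ℤ | latticeEmb q ∈ Q} ≤ 11 := by
  classical
  obtain ⟨p, hpQ, hpvis⟩ := hpan
  obtain ⟨a, b, hgcd, hwid⟩ := hlw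
  obtain ⟨T, hT⟩ := hrelax
  set L : Set (ℤ × ℤ) := {q : ℤ × ℤ | latticeEmb q ∈ Q} with hLdef
  have hLint : ∀ q : ℤ × ℤ, q ∈ L ↔ latticeEmb q ∈ panInt T := by
    intro q
    constructor
    · intro hq
      have hQsub : Q ⊆ panInt T := by
        rw [hT]
        exact convexHull_min (by rintro _ ⟨q', hq', rfl⟩; exact hq') (pan_convex T)
      exact hQsub hq
    · intro hq
      show latticeEmb q ∈ Q
      rw [hT]
      exact subset_convexHull ℝ _ ⟨q, hq, rfl⟩
  have hpL : p ∈ L := hpQ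
  have hSne : S.Nonempty := by
    rcases S.eq_empty_or_nonempty with h | h
    · exfalso
      rw [hQ, h] at hpQ
      simp [convexHull_empty] at hpQ
    · exact h
  have hBez : a * Int.gcdA a b + b * Int.gcdB a b = 1 := by
    have h := Int.gcd_eq_gcd_ab a b
    rw [hgcd] at h
    exact_mod_cast h.symm
  set A := Int.gcdA a b with hA
  set B := Int.gcdB a b with hB
  have hBezR : (a : ℝ) * (A : ℝ) + (b : ℝ) * (B : ℝ) = 1 := by exact_mod_cast hBez
  set φ : ℤ × ℤ → ℤ × ℤ := fun q => (A * q.1 + B * q.2, -b * q.1 + a * q.2) with hφ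
  set ψ : ℤ × ℤ → ℤ × ℤ := fun q => (a * q.1 - B * q.2, b * q.1 + A * q.2) with hψ
  have hψφ : ∀ q, ψ (φ q) = q := by
    intro q
    simp only [hφ, hψ]
    refine Prod.ext ?_ ?_
    · show a * (A * q.1 + B * q.2) - B * (-b * q.1 + a * q.2) = q.1
      linear_combination q.1 * hBez
    · show b * (A * q.1 + B * q.2) + A * (-b * q.1 + a * q.2) = q.2
      linear_combination q.2 * hBez
  have hφψ : ∀ q, φ (ψ q) = q := by
    intro q
    simp only [hφ, hψ]
    refine Prod.ext ?_ ?_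
    · show A * (a * q.1 - B * q.2) + B * (b * q.1 + A * q.2) = q.1
      linear_combination q.1 * hBez
    · show -b * (a * q.1 - B * q.2) + a * (b * q.1 + A * q.2) = q.2
      linear_combination q.2 * hBez
  have hφinj : Function.Injective φ := fun x y h => by rw [← hψφ x, ← hψφ y, h]
  set fL := panMap A B (-b) a with hfL
  set gL := panMap a (-B) b A with hgL
  have hfg : ∀ z, fL (gL z) = z := by
    intro z
    simp only [hfL, hgL, panMap_apply]
    push_cast
    refine Prod.ext ?_ ?_
    · show (A:ℝ) * ((a:ℝ) * z.1 + -(B:ℝ) * z.2) + (B:ℝ) * ((b:ℝ) * z.1 + (A:ℝ) * z.2) = z.1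
      linear_combination z.1 * hBezR
    · show (-(b:ℝ)) * ((a:ℝ) * z.1 + -(B:ℝ) * z.2) + (a:ℝ) * ((b:ℝ) * z.1 + (A:ℝ) * z.2) = z.2
      linear_combination z.2 * hBezR
  have hgf : ∀ z, gL (fL z) = z := by
    intro z
    simp only [hfL, hgL, panMap_apply]
    push_cast
    refine Prod.ext ?_ ?_
    · show (a:ℝ) * ((A:ℝ) * z.1 + (B:ℝ) * z.2) + -(B:ℝ) * (-(b:ℝ) * z.1 + (a:ℝ) * z.2) = z.1
      linear_combination z.1 * hBezR
    · show (b:ℝ) * ((A:ℝ) * z.1 + (B:ℝ) * z.2) + (A:ℝ) * (-(b:ℝ) * z.1 + (a:ℝ) * z.2) = z.2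
      linear_combination z.2 * hBezR
  set φH := panHomeo fL gL hfg hgf with hφH
  have hembφ : ∀ q : ℤ × ℤ, latticeEmb (φ q) = fL (latticeEmb q) := by
    intro q
    simp only [hφ, latticeEmb_pair, latticeEmb_eq, hfL, panMap_apply]
    refine Prod.ext ?_ ?_ <;> push_cast <;> ring
  have hembψ : ∀ q : ℤ × ℤ, latticeEmb (ψ q) = gL (latticeEmb q) := by
    intro q
    simp only [hψ, latticeEmb_pair, latticeEmb_eq, hgL, panMap_apply]
    refine Prod.ext ?_ ?_ <;> push_cast <;> ring
  set T' := T.image φ with hT'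
  set L' := φ '' L with hL'def
  have hint' : panInt T' = fL '' panInt T := by
    show interior _ = _
    rw [hT', Finset.coe_image]
    have h1 : latticeEmb '' (φ '' (T : Set (ℤ × ℤ)))
        = fL '' (latticeEmb '' (T : Set (ℤ × ℤ))) := by
      rw [← Set.image_comp, ← Set.image_comp]
      exact Set.image_congr' hembφ
    rw [h1, ← fL.image_convexHull]
    have := (Homeomorph.image_interior φH (convexHull ℝ (latticeEmb '' (T : Set (ℤ × ℤ))))).symm
    exact this
  have hL'mem : ∀ q : ℤ × ℤ, q ∈ L' ↔ latticeEmb q ∈ panInt T' := by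
    intro q
    rw [hint']
    constructor
    · rintro ⟨q₀, hq₀, rfl⟩
      exact ⟨latticeEmb q₀, (hLint q₀).mp hq₀, (hembφ q₀).symm⟩
    · rintro ⟨z, hz, hzq⟩
      have hzeq : z = latticeEmb (ψ q) := by
        have h2 : gL (fL z) = gL (latticeEmb q) := by rw [hzq]
        rw [hgf] at h2
        rw [h2, hembψ]
      exact ⟨ψ q, (hLint (ψ q)).mpr (by rw [← hzeq]; exact hz), hφψ q⟩
  obtain ⟨p₀, hp₀S, hp₀min⟩ := S.exists_min_image (fun q => a * q.2 - b * q.1) hSne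
  set m : ℤ := a * p₀.2 - b * p₀.1 with hmdef
  have hQwin : ∀ z ∈ Q, ((m : ℝ) ≤ (a : ℝ) * z.2 - (b : ℝ) * z.1 ∧
      (a : ℝ) * z.2 - (b : ℝ) * z.1 ≤ (m : ℝ) + 2) := by
    have hlin : IsLinearMap ℝ (fun z : ℝ × ℝ => (a : ℝ) * z.2 - (b : ℝ) * z.1) := by
      refine ⟨fun x y => ?_, fun c x => ?_⟩
      · simp only [Prod.fst_add, Prod.snd_add]; ring
      · simp only [Prod.smul_fst, Prod.smul_snd, smul_eq_mul]; ring
    have hconv : Convex ℝ {z : ℝ × ℝ | (m : ℝ) ≤ (a : ℝ) * z.2 - (b : ℝ) * z.1 ∧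
        (a : ℝ) * z.2 - (b : ℝ) * z.1 ≤ (m : ℝ) + 2} := by
      rw [Set.setOf_and]
      exact (convex_halfSpace_ge hlin _).inter (convex_halfSpace_le hlin _)
    have hsub : Q ⊆ {z : ℝ × ℝ | (m : ℝ) ≤ (a : ℝ) * z.2 - (b : ℝ) * z.1 ∧
        (a : ℝ) * z.2 - (b : ℝ) * z.1 ≤ (m : ℝ) + 2} := by
      rw [hQ]
      refine convexHull_min ?_ hconv
      rintro _ ⟨q', hq', rfl⟩
      have h1 : m ≤ a * q'.2 - b * q'.1 := hp₀min q' hq'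
      have h2 : a * q'.2 - b * q'.1 ≤ m + 2 := by
        have := hwid q' hq' p₀ hp₀S
        rcases abs_cases ((a * q'.2 - b * q'.1) - (a * p₀.2 - b * p₀.1)) with ⟨h', _⟩ | ⟨h', _⟩ <;>
          omega
      constructor
      · show (m : ℝ) ≤ (a : ℝ) * ((q'.2 : ℤ) : ℝ) - (b : ℝ) * ((q'.1 : ℤ) : ℝ)
        exact_mod_cast h1
      · show (a : ℝ) * ((q'.2 : ℤ) : ℝ) - (b : ℝ) * ((q'.1 : ℤ) : ℝ) ≤ (m : ℝ) + 2
        exact_mod_cast h2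
    exact fun z hz => hsub hz
  have hm' : ∀ q ∈ L', q.2 = m ∨ q.2 = m + 1 ∨ q.2 = m + 2 := by
    rintro _ ⟨q, hq, rfl⟩
    have hw := hQwin (latticeEmb q) hq
    simp only [latticeEmb_eq] at hw
    have h1 : m ≤ a * q.2 - b * q.1 := by exact_mod_cast hw.1
    have h2 : a * q.2 - b * q.1 ≤ m + 2 := by exact_mod_cast hw.2
    show -b * q.1 + a * q.2 = m ∨ -b * q.1 + a * q.2 = m + 1 ∨ -b * q.1 + a * q.2 = m + 2
    have hrw : -b * q.1 + a * q.2 = a * q.2 - b * q.1 := by ring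
    rw [hrw]
    omega
  have hvis' : ∀ q ∈ L', q ≠ φ p → ∀ r : ℤ × ℤ,
      latticeEmb r ∉ openSegment ℝ (latticeEmb (φ p)) (latticeEmb q) := by
    rintro _ ⟨q, hq, rfl⟩ hne r hr
    have hqp : q ≠ p := fun h => hne (by rw [h])
    rw [hembφ p, hembφ q, openSegment_eq_image'] at hr
    obtain ⟨t, ht, hteq⟩ := hr
    have hteq2 : latticeEmb r = fL (latticeEmb p + t • (latticeEmb q - latticeEmb p)) := by
      rw [map_add, map_smul, map_sub]
      exact hteq.symm
    have hmem : latticeEmb (ψ r) ∈ openSegment ℝ (latticeEmb p) (latticeEmb q) := by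
      rw [hembψ, hteq2, hgf, openSegment_eq_image']
      exact ⟨t, ht, rfl⟩
    exact hpvis q hq hqp (ψ r) hmem
  have hmain := pan_main T' L' (φ p) m hL'mem ⟨p, hpL, rfl⟩ hvis' hm'
  have hcard : L'.ncard = L.ncard := Set.ncard_image_of_injective L hφinj
  omega
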